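/- A frame homomorphism f : L → M is exact (it sends every exact meet to an exact meet and preserves it) if and only if the preimage f⁻¹(G) of every exact filter G of M is an exact filter of L. -/
import Mathlib


/-- A meet (of the set `S`) is exact if it distributes over all joins. -/
def IsExactMeet {L : Type*} [Order.Frame L] (S : Set L) : Prop :=
  ∀ b : L, sInf ((· ⊔ b) '' S) = sInf S ⊔ b

/-- A filter of a frame: contains ⊤, upward closed, closed under binary meets. -/
def IsFrameFilter {L : Type*} [Order.Frame L] (F : Set L) : Prop :=
  ⊤ ∈ F ∧ (∀ x ∈ F, ∀ y : L, x ≤ y → y ∈ F) ∧ ∀ x ∈ F, ∀ y ∈ F, x ⊓ y ∈ F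

/-- An exact filter: a filter closed under exact meets. -/
def IsExactFilter {L : Type*} [Order.Frame L] (F : Set L) : Prop :=
  IsFrameFilter F ∧ ∀ S : Set L, S ⊆ F → IsExactMeet S → sInf S ∈ F

/-- A frame homomorphism is exact (sends every exact meet to an exact meet and
preserves it) iff preimages of exact filters are exact filters. -/
theorem stmt11 {L M : Type*} [Order.Frame L] [Order.Frame M] (f : FrameHom L M) :
    (∀ S : Set L, IsExactMeet S → IsExactMeet (f '' S) ∧ sInf (f '' S) = f (sInf S)) ↔
    (∀ G : Set M, IsExactFilter G → IsExactFilter (f ⁻¹' G)) := by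
  constructor
  · intro hf G hG
    obtain ⟨⟨htop, hup, hmeet⟩, hexact⟩ := hG
    refine ⟨⟨?_, ?_, ?_⟩, ?_⟩
    · simp only [Set.mem_preimage, map_top]; exact htop
    · intro x hx y hxy
      exact hup _ hx _ (OrderHomClass.mono f hxy)
    · intro x hx y hy
      simp only [Set.mem_preimage, map_inf]
      exact hmeet _ hx _ hy
    · intro S hS hSe
      have h1 := hf S hSe
      have h2 := hexact (f '' S) (by rintro m ⟨a, ha, rfl⟩; exact hS ha) h1.1
      rw [h1.2] at h2
      exact h2
  · intro h S hS
    have key : ∀ b : M, sInf ((· ⊔ b) '' (f '' S)) ≤ f (sInf S) ⊔ b := by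
      intro b
      set c := sInf ((· ⊔ b) '' (f '' S)) with hc
      set G : Set M := {m | c ≤ m ⊔ b} with hG
      have hGex : IsExactFilter G := by
        refine ⟨⟨?_, ?_, ?_⟩, ?_⟩
        · simp [hG]
        · intro x hx y hxy
          exact le_trans hx (sup_le_sup_right hxy b)
        · intro x hx y hy
          have hxb : c ≤ (x ⊔ b) ⊓ (y ⊔ b) := le_inf hx hy
          simp only [hG, Set.mem_setOf_eq]
          rwa [← sup_inf_right] at hxb
        · intro T hT hTe
          have hle : c ≤ sInf ((· ⊔ b) '' T) := by
            apply le_sInf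
            rintro m ⟨t, ht, rfl⟩
            exact hT ht
          rw [hTe b] at hle
          exact hle
      have hpre := h G hGex
      have hSsub : S ⊆ f ⁻¹' G := by
        intro a ha
        show c ≤ f a ⊔ b
        exact sInf_le (Set.mem_image_of_mem _ (Set.mem_image_of_mem _ ha))
      exact hpre.2 S hSsub hS
    have heq : sInf (f '' S) = f (sInf S) := by
      apply le_antisymm
      · have hb := key ⊥
        simpa only [sup_bot_eq, Set.image_id'] using hb
      · apply le_sInf
        rintro m ⟨a, ha, rfl⟩
        exact OrderHomClass.mono f (sInf_le ha)
    refine ⟨?_, heq⟩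
    intro b
    apply le_antisymm
    · rw [heq]
      exact key b
    · apply le_sInf
      rintro m ⟨m', ⟨a, ha, rfl⟩, rfl⟩
      exact sup_le_sup_right (sInf_le (Set.mem_image_of_mem f ha)) b
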